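/- Let t ↦ g(t) := t − ψ(t) where ψ is the inverse of a normalized Herbrand-type function φ(x) = Σ_{σ∈G} min(d(σ), x) for a finite group G with depth function d, and let ℓ := max{d(σ) : σ ≠ 1} (assumed finite) and u := φ(ℓ). Then g is nondecreasing on ℝ≥0, strictly increasing on [0,u), and constant equal to u − ℓ on [u,∞). -/

import Mathlib

noncomputable section
open scoped Classical

/-- The abstract normalized Herbrand function
`phi(x) = sum over G of min(d sigma, x)` of a finite group with depth function `d`. -/
def herbrandAbs {G : Type*} [Fintype G] (d : G → WithTop ℝ) (x : ℝ) : ℝ :=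
  ∑ σ : G, WithTop.untopD 0 (min (d σ) (x : WithTop ℝ))

/-- Monotonicity of `t - ψ t` for the inverse `ψ` of an abstract normalized
Herbrand function: nondecreasing on `[0,∞)`, strictly increasing on `[0,u)`
where `u = φ(ℓ)` and `ℓ` is the largest finite depth, and constant `u - ℓ`
on `[u,∞)`. -/
theorem sub_psi_monotone {G : Type*} [Group G] [Fintype G] [Nontrivial G]
    (d : G → WithTop ℝ)
    (hd0 : ∀ σ : G, 0 ≤ d σ)
    (hdtop : ∀ σ : G, d σ = ⊤ ↔ σ = 1)
    (ℓ : ℝ) (hℓ : IsGreatest {x : ℝ | ∃ σ : G, σ ≠ 1 ∧ d σ = (x : WithTop ℝ)} ℓ)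
    (ψ : ℝ → ℝ)
    (hψ : Set.InvOn ψ (herbrandAbs d) (Set.Ici 0) (Set.Ici 0))
    (hψmap : Set.MapsTo ψ (Set.Ici 0) (Set.Ici 0))
    (hφmap : Set.MapsTo (herbrandAbs d) (Set.Ici 0) (Set.Ici 0)) :
    MonotoneOn (fun t => t - ψ t) (Set.Ici 0) ∧
    StrictMonoOn (fun t => t - ψ t) (Set.Ico 0 (herbrandAbs d ℓ)) ∧
    ∀ t : ℝ, herbrandAbs d ℓ ≤ t → t - ψ t = herbrandAbs d ℓ - ℓ := by
  obtain ⟨⟨σ0, hσ0ne, hσ0⟩, hub⟩ := hℓ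
  set c : G → ℝ := fun σ => WithTop.untopD 0 (d σ) with hc
  have hℓ0 : (0:ℝ) ≤ ℓ := by
    have := hd0 σ0
    rw [hσ0] at this
    exact_mod_cast this
  have hcσ : ∀ σ : G, σ ≠ 1 → d σ = (c σ : WithTop ℝ) := by
    intro σ hσ
    have hne : d σ ≠ ⊤ := fun h => hσ ((hdtop σ).mp h)
    obtain ⟨r, hr⟩ := WithTop.ne_top_iff_exists.mp hne
    have hcr : c σ = r := by rw [hc]; simp [← hr]
    rw [hcr, hr]
  have hcσ0 : c σ0 = ℓ := by simp [hc, hσ0]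
  have hcle : ∀ σ : G, σ ≠ 1 → c σ ≤ ℓ := fun σ hσ => hub ⟨σ, hσ, hcσ σ hσ⟩
  set F : ℝ → ℝ := fun x => ∑ σ ∈ Finset.univ.erase (1:G), min (c σ) x with hF
  have rep : ∀ x : ℝ, 0 ≤ x → herbrandAbs d x = x + F x := by
    intro x hx
    rw [herbrandAbs, ← Finset.add_sum_erase _ _ (Finset.mem_univ (1:G))]
    congr 1
    · have h1 : d (1:G) = ⊤ := (hdtop 1).mpr rfl
      rw [h1]
      simp
    · refine Finset.sum_congr rfl fun σ hσ => ?_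
      have hσ1 : σ ≠ 1 := (Finset.mem_erase.mp hσ).1
      rw [hcσ σ hσ1]
      rw [show ((c σ : WithTop ℝ) ⊓ (x : WithTop ℝ)) = ((min (c σ) x : ℝ) : WithTop ℝ) by push_cast; rfl,
        WithTop.untopD_coe]
  have Fmono : Monotone F := by
    intro x y hxy
    exact Finset.sum_le_sum fun σ _ => min_le_min le_rfl hxy
  have Fstrict : ∀ x y : ℝ, x < y → x < ℓ → F x < F y := by
    intro x y hxy hxℓ
    refine Finset.sum_lt_sum (fun σ _ => min_le_min le_rfl hxy.le)
      ⟨σ0, Finset.mem_erase.mpr ⟨hσ0ne, Finset.mem_univ _⟩, ?_⟩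
    rw [hcσ0, min_eq_right hxℓ.le]
    exact lt_min hxℓ hxy
  have Fconst : ∀ x : ℝ, ℓ ≤ x → F x = F ℓ := by
    intro x hx
    refine Finset.sum_congr rfl fun σ hσ => ?_
    have h1 := hcle σ (Finset.mem_erase.mp hσ).1
    rw [min_eq_left (h1.trans hx), min_eq_left h1]
  have hφstrict : StrictMonoOn (herbrandAbs d) (Set.Ici 0) := by
    intro x hx y hy hxy
    rw [rep x hx, rep y hy]
    exact add_lt_add_of_lt_of_le hxy (Fmono hxy.le)
  have hψmono : MonotoneOn ψ (Set.Ici 0) := by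
    intro t ht t' ht' htt'
    by_contra h
    push_neg at h
    have h2 := hφstrict (hψmap ht') (hψmap ht) h
    rw [hψ.2 ht, hψ.2 ht'] at h2
    exact absurd htt' (not_le.mpr h2)
  have hψstrict : ∀ t t' : ℝ, t ∈ Set.Ici (0:ℝ) → t' ∈ Set.Ici (0:ℝ) → t < t' → ψ t < ψ t' := by
    intro t t' ht ht' htt'
    by_contra h
    push_neg at h
    have h2 := hφstrict.monotoneOn (hψmap ht') (hψmap ht) h
    rw [hψ.2 ht, hψ.2 ht'] at h2
    exact absurd h2 (not_le.mpr htt')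
  have hψℓ : ψ (herbrandAbs d ℓ) = ℓ := hψ.1 (Set.mem_Ici.mpr hℓ0)
  have hu0 : (0:ℝ) ≤ herbrandAbs d ℓ := hφmap (Set.mem_Ici.mpr hℓ0)
  have hg : ∀ t : ℝ, 0 ≤ t → t - ψ t = F (ψ t) := by
    intro t ht
    have h1 := hψ.2 (Set.mem_Ici.mpr ht)
    have h2 := rep (ψ t) (hψmap (Set.mem_Ici.mpr ht))
    rw [h1] at h2
    linarith
  refine ⟨?_, ?_, ?_⟩
  · intro t ht t' ht' h
    simp only
    rw [hg t ht, hg t' ht']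
    exact Fmono (hψmono ht ht' h)
  · intro t ht t' ht' h
    simp only
    rw [hg t ht.1, hg t' ht'.1]
    refine Fstrict _ _ (hψstrict t t' ht.1 ht'.1 h) ?_
    rw [← hψℓ]
    exact hψstrict t _ ht.1 hu0 ht.2
  · intro t htu
    have ht0 : (0:ℝ) ≤ t := hu0.trans htu
    have hℓψ : ℓ ≤ ψ t := by
      rw [← hψℓ]
      exact hψmono hu0 ht0 htu
    rw [hg t ht0, Fconst _ hℓψ]
    have := rep ℓ hℓ0
    linarith
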